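/- For every natural number n ≥ 2, ∑_{k=1}^{n-1} k·H_k·H_{n-k} = C(n+1,2)·(H_{n+1}² - H_{n+1}^{(2)} - 2H_{n+1} + 2), where C(n+1,2) = n(n+1)/2. -/

import Mathlib

open Finset

noncomputable def H (n : ℕ) : ℝ := ∑ i ∈ Finset.range n, (1 : ℝ) / (i + 1)

noncomputable def H2 (n : ℕ) : ℝ := ∑ i ∈ Finset.range n, (1 : ℝ) / ((i + 1) ^ 2)

lemma H_succ (n : ℕ) : H (n + 1) = H n + 1 / (n + 1) := by
  simp [H, Finset.sum_range_succ]

lemma H2_succ (n : ℕ) : H2 (n + 1) = H2 n + 1 / ((n : ℝ) + 1) ^ 2 := by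
  simp [H2, Finset.sum_range_succ]

lemma H_one : H 1 = 1 := by simp [H]

/-- reflected sum of 1/(m-i+2) -/
lemma refl_sum (m : ℕ) :
    ∑ i ∈ Finset.range (m + 1), (1 : ℝ) / ((m - i : ℕ) + 2) = H (m + 2) - 1 := by
  have h := Finset.sum_range_reflect (fun i => (1 : ℝ) / ((i : ℕ) + 2)) (m + 1)
  simp only [Nat.add_sub_cancel] at h
  rw [h]
  have h2 : H (m + 2) = 1 + ∑ i ∈ Finset.range (m + 1), (1 : ℝ) / ((i : ℕ) + 2) := by
    rw [H, Finset.sum_range_succ']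
    rw [Finset.sum_congr rfl (fun i _ => by push_cast; ring_nf :
      ∀ i ∈ Finset.range (m + 1), (1 : ℝ) / (((i + 1 : ℕ) : ℝ) + 1) = 1 / ((i : ℝ) + 2))]
    push_cast
    ring
  rw [h2]; ring

/-- partial fractions -/
lemma pf_sum (m : ℕ) :
    ∑ i ∈ Finset.range (m + 1), (1 : ℝ) / (((i : ℝ) + 1) * ((m - i : ℕ) + 2))
      = (H (m + 1) + H (m + 2) - 1) / (m + 3) := by
  have key : ∀ i ∈ Finset.range (m + 1),
      (1 : ℝ) / (((i : ℝ) + 1) * ((m - i : ℕ) + 2))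
        = (1 / ((i : ℝ) + 1) + 1 / ((m - i : ℕ) + 2)) / ((m : ℝ) + 3) := by
    intro i hi
    rw [Finset.mem_range] at hi
    have hc : ((m - i : ℕ) : ℝ) = (m : ℝ) - i := by
      rw [Nat.cast_sub (by omega)]
    rw [hc]
    have h1 : (0:ℝ) < (i : ℝ) + 1 := by positivity
    have h2 : (0:ℝ) < (m : ℝ) - i + 2 := by
      have : (i : ℝ) ≤ m := by exact_mod_cast Nat.le_of_lt_succ hi
      linarith
    field_simp
    ring
  rw [Finset.sum_congr rfl key, ← Finset.sum_div, Finset.sum_add_distrib, refl_sum]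
  rw [show ∑ i ∈ Finset.range (m + 1), (1:ℝ) / ((i : ℝ) + 1) = H (m + 1) from rfl]
  ring

/-- convolution T lemma -/
lemma T_lemma (m : ℕ) :
    ∑ i ∈ Finset.range (m + 1), H (m - i + 1) / ((i : ℝ) + 1)
      = H (m + 2) ^ 2 - H2 (m + 2) := by
  induction m with
  | zero =>
      simp [H, H2, Finset.sum_range_succ]
      norm_num
  | succ m ih =>
      rw [Finset.sum_range_succ]
      have hlast : H (m + 1 - (m + 1) + 1) / ((m + 1 : ℕ) + 1 : ℝ) = 1 / ((m : ℝ) + 2) := by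
        simp [H_one]
        ring
      have hsplit : ∀ i ∈ Finset.range (m + 1),
          H (m + 1 - i + 1) / ((i : ℝ) + 1)
            = H (m - i + 1) / ((i : ℝ) + 1)
              + (1 / (((i : ℝ) + 1) * ((m - i : ℕ) + 2))) := by
        intro i hi
        rw [Finset.mem_range] at hi
        have e1 : m + 1 - i + 1 = (m - i + 1) + 1 := by omega
        have e2 : ((m - i + 1 : ℕ) : ℝ) + 1 = ((m - i : ℕ) : ℝ) + 2 := by push_cast; ring
        rw [e1, H_succ (m - i + 1), e2]
        field_simp
      rw [Finset.sum_congr rfl hsplit, Finset.sum_add_distrib, ih, pf_sum, hlast]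
      have e3 : H (m + 1 + 2) = H (m + 2) + 1 / ((m : ℝ) + 3) := by
        rw [show m + 1 + 2 = (m + 2) + 1 from rfl, H_succ]; push_cast; ring
      have e4 : H2 (m + 1 + 2) = H2 (m + 2) + 1 / ((m : ℝ) + 3) ^ 2 := by
        rw [show m + 1 + 2 = (m + 2) + 1 from rfl, H2_succ]; push_cast; ring
      have e5 : H (m + 1) = H (m + 2) - 1 / ((m : ℝ) + 2) := by
        have h := H_succ (m + 1)
        push_cast at h
        rw [show m + 2 = m + 1 + 1 from rfl, h]; ring
      rw [e3, e4, e5]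
      have p2 : ((m : ℝ) + 2) ≠ 0 := by positivity
      have p3 : ((m : ℝ) + 3) ≠ 0 := by positivity
      field_simp
      ring

/-- sum of harmonic numbers -/
lemma sumH (N : ℕ) :
    ∑ i ∈ Finset.range N, H (i + 1) = (N + 1) * H (N + 1) - (N + 1) := by
  induction N with
  | zero => simp [H]
  | succ N ih =>
      rw [Finset.sum_range_succ, ih]
      have e1 : H (N + 1 + 1) = H (N + 1) + 1 / ((N : ℝ) + 2) := by
        rw [H_succ (N + 1)]; push_cast; ring
      rw [e1]
      have p2 : ((N : ℝ) + 2) ≠ 0 := by positivity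
      push_cast
      field_simp
      ring

/-- the A sum: ∑ H(i+1)/(m-i+2) -/
lemma A_lemma (m : ℕ) :
    ∑ i ∈ Finset.range (m + 1), H (i + 1) / (((m - i : ℕ) : ℝ) + 2)
      = H (m + 3) ^ 2 - H2 (m + 3) - H (m + 2) := by
  have h := Finset.sum_range_reflect
      (fun i => H (i + 1) / (((m - i : ℕ) : ℝ) + 2)) (m + 1)
  simp only [Nat.add_sub_cancel] at h
  have hcongr : ∀ j ∈ Finset.range (m + 1),
      H (m - j + 1) / (((m - (m - j) : ℕ) : ℝ) + 2)
        = H (m - j + 1) / ((j : ℝ) + 2) := by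
    intro j hj
    rw [Finset.mem_range] at hj
    have : m - (m - j) = j := by omega
    rw [this]
  rw [← h, Finset.sum_congr rfl hcongr]
  -- relate to T_lemma at m+1, peeling the first term
  have hT := T_lemma (m + 1)
  rw [Finset.sum_range_succ'] at hT
  have hfirst : H (m + 1 - 0 + 1) / ((0 : ℕ) + 1 : ℝ) = H (m + 2) := by
    norm_num
  have hcongr2 : ∀ j ∈ Finset.range (m + 1),
      H (m + 1 - (j + 1) + 1) / (((j + 1 : ℕ) : ℝ) + 1)
        = H (m - j + 1) / ((j : ℝ) + 2) := by
    intro j hj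
    rw [Finset.mem_range] at hj
    have e1 : m + 1 - (j + 1) = m - j := by omega
    rw [e1]; push_cast; ring_nf
  rw [hfirst] at hT
  rw [Finset.sum_congr rfl hcongr2] at hT
  have : ((m + 1 : ℕ) + 2) = m + 3 := by omega
  rw [this] at hT
  linarith

/-- the main convolution sum, reindexed over range -/
lemma S_lemma (m : ℕ) :
    ∑ i ∈ Finset.range (m + 1), ((i : ℝ) + 1) * H (i + 1) * H (m - i + 1)
      = ((m : ℝ) + 2) * ((m : ℝ) + 3) / 2
        * (H (m + 3) ^ 2 - H2 (m + 3) - 2 * H (m + 3) + 2) := by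
  induction m with
  | zero =>
      simp [H, H2, Finset.sum_range_succ]
      norm_num
  | succ m ih =>
      rw [Finset.sum_range_succ]
      have hlast : ((m + 1 : ℕ) : ℝ) + 1 = (m : ℝ) + 2 := by push_cast; ring
      have hlast2 : H (m + 1 - (m + 1) + 1) = 1 := by simp [H_one]
      have hsplit : ∀ i ∈ Finset.range (m + 1),
          ((i : ℝ) + 1) * H (i + 1) * H (m + 1 - i + 1)
            = ((i : ℝ) + 1) * H (i + 1) * H (m - i + 1)
              + ((i : ℝ) + 1) * H (i + 1) / (((m - i : ℕ) : ℝ) + 2) := by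
        intro i hi
        rw [Finset.mem_range] at hi
        have e1 : m + 1 - i + 1 = (m - i + 1) + 1 := by omega
        have e2 : ((m - i + 1 : ℕ) : ℝ) + 1 = ((m - i : ℕ) : ℝ) + 2 := by push_cast; ring
        rw [e1, H_succ (m - i + 1), e2]
        field_simp
      rw [Finset.sum_congr rfl hsplit, Finset.sum_add_distrib, ih]
      -- handle the R sum : (i+1)/(m-i+2) = (m+3)/(m-i+2) - 1
      have hR : ∀ i ∈ Finset.range (m + 1),
          ((i : ℝ) + 1) * H (i + 1) / (((m - i : ℕ) : ℝ) + 2)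
            = ((m : ℝ) + 3) * (H (i + 1) / (((m - i : ℕ) : ℝ) + 2)) - H (i + 1) := by
        intro i hi
        rw [Finset.mem_range] at hi
        have hc : ((m - i : ℕ) : ℝ) = (m : ℝ) - i := by rw [Nat.cast_sub (by omega)]
        have h2 : (0:ℝ) < (m : ℝ) - i + 2 := by
          have : (i : ℝ) ≤ m := by exact_mod_cast Nat.le_of_lt_succ hi
          linarith
        rw [hc]
        field_simp
        ring
      rw [Finset.sum_congr rfl hR, Finset.sum_sub_distrib, ← Finset.mul_sum, A_lemma, sumH]
      rw [hlast, hlast2]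
      -- now pure algebra
      have e3 : H (m + 1 + 3) = H (m + 3) + 1 / ((m : ℝ) + 4) := by
        rw [show m + 1 + 3 = (m + 3) + 1 from rfl, H_succ]; push_cast; ring
      have e4 : H2 (m + 1 + 3) = H2 (m + 3) + 1 / ((m : ℝ) + 4) ^ 2 := by
        rw [show m + 1 + 3 = (m + 3) + 1 from rfl, H2_succ]; push_cast; ring
      have e5 : H (m + 2) = H (m + 3) - 1 / ((m : ℝ) + 3) := by
        have h := H_succ (m + 2)
        push_cast at h
        rw [show m + 3 = m + 2 + 1 from rfl, h]; ring
      rw [e3, e4, e5]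
      have p3 : ((m : ℝ) + 3) ≠ 0 := by positivity
      have p4 : ((m : ℝ) + 4) ≠ 0 := by positivity
      push_cast
      field_simp
      ring

theorem sum_k_harmonic_conv (n : ℕ) (hn : 2 ≤ n) :
    ∑ k ∈ Finset.Icc 1 (n - 1), (k : ℝ) * H k * H (n - k)
      = ((n + 1).choose 2 : ℝ) * (H (n + 1) ^ 2 - H2 (n + 1) - 2 * H (n + 1) + 2) := by
  obtain ⟨m, rfl⟩ : ∃ m, n = m + 2 := ⟨n - 2, by omega⟩
  have hIcc : Finset.Icc 1 (m + 2 - 1) = Finset.Ico 1 (m + 2) := by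
    rw [show m + 2 - 1 = m + 1 from rfl, ← Finset.Ico_add_one_right_eq_Icc]; rfl
  rw [hIcc, Finset.sum_Ico_eq_sum_range]
  have hcongr : ∀ i ∈ Finset.range (m + 2 - 1),
      ((1 + i : ℕ) : ℝ) * H (1 + i) * H (m + 2 - (1 + i))
        = ((i : ℝ) + 1) * H (i + 1) * H (m - i + 1) := by
    intro i hi
    rw [Finset.mem_range] at hi
    have e1 : 1 + i = i + 1 := by omega
    have e2 : m + 2 - (i + 1) = m - i + 1 := by omega
    rw [e1, e2]; push_cast; ring
  rw [Finset.sum_congr rfl hcongr]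
  have hrange : m + 2 - 1 = m + 1 := by omega
  rw [hrange, S_lemma]
  have hchoose : (((m + 2 + 1).choose 2 : ℕ) : ℝ) = ((m : ℝ) + 2) * ((m : ℝ) + 3) / 2 := by
    have hd : 2 ∣ (m + 3) * (m + 2) := by
      rw [mul_comm]
      exact (Nat.even_mul_succ_self (m + 2)).two_dvd
    have h : (m + 3).choose 2 * 2 = (m + 2) * (m + 3) := by
      rw [Nat.choose_two_right, show m + 3 - 1 = m + 2 from rfl,
        Nat.div_mul_cancel hd, mul_comm]
    have : (((m + 3).choose 2 : ℕ) : ℝ) * 2 = ((m : ℝ) + 2) * ((m : ℝ) + 3) := by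
      exact_mod_cast congrArg (Nat.cast : ℕ → ℝ) h
    have h32 : m + 2 + 1 = m + 3 := by omega
    rw [h32]
    linarith
  rw [hchoose]
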